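/- Let G ⊆ ℕ^n be a finite nonempty antichain for the pointwise order (the minimal generating set of a monomial ideal I), let c ∈ ℕ^n with c ≠ 0 and a ≤ c for some a ∈ G (i.e., c ∈ I), and let m ∈ C_{inf G}(c) with m ≠ 0. Then: (1) no a ∈ G satisfies a ≤ m (i.e., m ∉ I); and (2) for every a ∈ G with a ≠ c, m ≤ a fails (m divides no minimal generator of I other than possibly c). -/

import Mathlib

/-- `Cset g c` is the set of exponent vectors `d` with `d ≠ 0`, `d i ≥ c i` whenever
`c i > g i`, and `d i < c i` for some `i` with `c i = g i`. -/
def Cset {ι : Type*} (g c : ι → ℕ) : Set (ι → ℕ) :=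
  {d | d ≠ 0 ∧ (∀ i, g i < c i → c i ≤ d i) ∧ ∃ i, c i = g i ∧ d i < c i}

theorem stmt8 {n : ℕ} (G : Finset (Fin n → ℕ)) (hG : G.Nonempty)
    (hanti : IsAntichain (· ≤ ·) (G : Set (Fin n → ℕ)))
    (c : Fin n → ℕ) (hc0 : c ≠ 0) (hcI : ∃ a ∈ G, a ≤ c)
    (m : Fin n → ℕ) (hm0 : m ≠ 0)
    (hm : m ∈ Cset (fun i => G.inf' hG fun a => a i) c) :
    (∀ a ∈ G, ¬ a ≤ m) ∧ (∀ a ∈ G, a ≠ c → ¬ m ≤ a) := by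
  obtain ⟨-, hge, i, hci, hmi⟩ := hm
  constructor
  · rintro a ha hle
    exact absurd (lt_of_le_of_lt (hle i) hmi)
      (by rw [not_lt, hci]; exact Finset.inf'_le (fun a => a i) ha)
  · rintro a ha hne hle
    obtain ⟨b, hb, hbc⟩ := hcI
    have hba : b ≤ a := by
      intro j
      rcases lt_or_ge (G.inf' hG fun a => a j) (c j) with h | h
      · exact le_trans (hbc j) (le_trans (hge j h) (hle j))
      · exact le_trans (hbc j) (le_trans h (Finset.inf'_le (fun a => a j) ha))
    have hbea : b = a := by
      by_contra hne'
      exact hanti hb ha hne' hba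
    have hca : c ≤ a := by
      intro j
      rcases lt_or_ge (G.inf' hG fun a => a j) (c j) with h | h
      · exact le_trans (hge j h) (hle j)
      · exact le_trans h (Finset.inf'_le (fun a => a j) ha)
    exact hne (le_antisymm (hbea ▸ hbc) hca)
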